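/- Let G be a finite group all of whose irreducible complex characters have degree at most 2. Then the character table sum of G is at most twice the character degree sum of G. -/

import Mathlib

open CategoryTheory
open scoped ComplexOrder

/-- `S` is the (finite) set of irreducible complex characters of `G`. -/
def IsIrrFamily (G : Type) [Group G] (S : Finset (G → ℂ)) : Prop :=
  (∀ f ∈ S, ∃ V : FDRep ℂ G, Simple V ∧ V.character = f) ∧
  ∀ V : FDRep ℂ G, Simple V → V.character ∈ S

/-- The character table sum: sum of all character values over irreducible characters
and conjugacy classes. -/
noncomputable def tableSum (G : Type) [Group G] (S : Finset (G → ℂ)) : ℂ :=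
  ∑ f ∈ S, ∑ᶠ C : ConjClasses G, f (Quotient.out C)

/-- The character degree sum: sum of the values at the identity. -/
noncomputable def degreeSum (G : Type) [Group G] (S : Finset (G → ℂ)) : ℂ :=
  ∑ f ∈ S, f 1

open CategoryTheory Module
set_option linter.unusedSectionVars false
noncomputable section
namespace CharAux
variable {G : Type} [Group G]

/-- invariance of a submodule under a representation -/
def IsInv (X : FDRep ℂ G) (p : Submodule ℂ X) : Prop := ∀ (g : G), ∀ x ∈ p, X.ρ g x ∈ p

def subρ (X : FDRep ℂ G) (p : Submodule ℂ X) (hp : IsInv X p) :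
    Representation ℂ G p where
  toFun g := (X.ρ g).restrict (fun x hx => hp g x hx)
  map_one' := by ext x; simp [LinearMap.restrict_apply]
  map_mul' g h := by ext x; simp [LinearMap.restrict_apply]

def subRep (X : FDRep ℂ G) (p : Submodule ℂ X) (hp : IsInv X p) : FDRep ℂ G :=
  FDRep.of (subρ X p hp)

lemma finrank_subRep (X : FDRep ℂ G) (p : Submodule ℂ X) (hp : IsInv X p) :
    finrank ℂ (subRep X p hp) = finrank ℂ p := rfl

def incl (X : FDRep ℂ G) (p : Submodule ℂ X) (hp : IsInv X p) : subRep X p hp ⟶ X where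
  hom := FGModuleCat.ofHom p.subtype
  comm g := by ext x; rfl

lemma char_add_of_isCompl (X : FDRep ℂ G) (p q : Submodule ℂ X) (hp : IsInv X p)
    (hq : IsInv X q) (hc : IsCompl p q) (g : G) :
    X.character g = (subRep X p hp).character g + (subRep X q hq).character g := by
  have key : (Submodule.prodEquivOfIsCompl p q hc).symm.conj (X.ρ g)
      = LinearMap.prodMap (subρ X p hp g) (subρ X q hq g) := by
    apply LinearMap.ext
    rintro ⟨x, y⟩
    rw [LinearEquiv.conj_apply, LinearMap.comp_apply, LinearMap.comp_apply]
    simp only [LinearEquiv.symm_symm, LinearEquiv.coe_coe]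
    have he : (p.prodEquivOfIsCompl q hc) (x, y) = (x : X) + (y : X) := by
      have h0 := Submodule.coe_prodEquivOfIsCompl (p := p) (q := q) hc
      calc (p.prodEquivOfIsCompl q hc) (x, y)
          = ((p.prodEquivOfIsCompl q hc) : (p × q) →ₗ[ℂ] X) (x, y) := rfl
        _ = (p.subtype.coprod q.subtype) (x, y) := by rw [h0]
        _ = (x : X) + (y : X) := by simp
    rw [he, map_add]
    have h1 : X.ρ g (x : X) = ((⟨X.ρ g x, hp g x x.2⟩ : p) : X) := rfl
    have h2 : X.ρ g (y : X) = ((⟨X.ρ g y, hq g y y.2⟩ : q) : X) := rfl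
    rw [h1, h2, map_add, Submodule.prodEquivOfIsCompl_symm_apply_left,
      Submodule.prodEquivOfIsCompl_symm_apply_right]
    ext <;> simp [subρ, LinearMap.restrict_apply]
  have tr := LinearMap.trace_conj' (X.ρ g) (Submodule.prodEquivOfIsCompl p q hc).symm
  show LinearMap.trace ℂ X (X.ρ g) = _
  rw [← tr, key, LinearMap.trace_prodMap']
  rfl

variable [Fintype G]

lemma exists_isCompl_inv (X : FDRep ℂ G) (p : Submodule ℂ X) (hp : IsInv X p) :
    ∃ q : Submodule ℂ X, IsInv X q ∧ IsCompl p q := by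
  obtain ⟨q₀, hq₀⟩ := Submodule.exists_isCompl p
  set π₀ : X →ₗ[ℂ] p := p.linearProjOfIsCompl q₀ hq₀ with hπ₀def
  set π : X →ₗ[ℂ] p :=
    (Fintype.card G : ℂ)⁻¹ • ∑ g : G, (subρ X p hp g⁻¹) ∘ₗ (π₀ ∘ₗ (X.ρ g)) with hπdef
  have hterm : ∀ (g : G) (x : p), (subρ X p hp g⁻¹) (π₀ (X.ρ g (x : X))) = x := by
    intro g x
    have hmem : X.ρ g (x : X) ∈ p := hp g _ x.2
    have h1 : π₀ (X.ρ g (x : X)) = ⟨X.ρ g (x : X), hmem⟩ := by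
      have := Submodule.linearProjOfIsCompl_apply_left hq₀ (⟨X.ρ g (x : X), hmem⟩ : p)
      exact this
    rw [h1]
    apply Subtype.ext
    show X.ρ g⁻¹ (X.ρ g (x : X)) = (x : X)
    rw [← Module.End.mul_apply, ← map_mul, inv_mul_cancel, map_one, Module.End.one_apply]
  have hproj : ∀ x : p, π (x : X) = x := by
    intro x
    rw [hπdef]
    simp only [LinearMap.smul_apply, LinearMap.coe_sum, Finset.sum_apply, LinearMap.comp_apply]
    rw [Finset.sum_congr rfl fun g _ => hterm g x]
    rw [Finset.sum_const, Finset.card_univ, ← Nat.cast_smul_eq_nsmul ℂ, smul_smul]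
    rw [inv_mul_cancel₀ (by exact_mod_cast Nat.cast_ne_zero.mpr Fintype.card_ne_zero), one_smul]
  have hequi : ∀ (g : G) (x : X), π (X.ρ g x) = (subρ X p hp g) (π x) := by
    intro g x
    rw [hπdef]
    simp only [LinearMap.smul_apply, LinearMap.coe_sum, Finset.sum_apply, LinearMap.comp_apply,
      map_smul, map_sum]
    congr 1
    refine Fintype.sum_bijective (· * g) (Group.mulRight_bijective g) _ _ (fun h => ?_)
    have e1 : X.ρ h (X.ρ g x) = X.ρ (h * g) x := by
      rw [← Module.End.mul_apply, ← map_mul]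
    have e2 : (subρ X p hp g) ((subρ X p hp (h * g)⁻¹) (π₀ (X.ρ (h * g) x)))
        = (subρ X p hp (g * (h * g)⁻¹)) (π₀ (X.ρ (h * g) x)) := by
      rw [← Module.End.mul_apply, ← map_mul]
    rw [e1, e2]
    congr 1
    simp [mul_inv_rev, ← mul_assoc]
  refine ⟨LinearMap.ker π, ?_, LinearMap.isCompl_of_proj hproj⟩
  intro g x hx
  rw [LinearMap.mem_ker] at hx ⊢
  rw [hequi, hx, map_zero]


lemma simple_crit (X : FDRep ℂ G) (hnt : Nontrivial X)
    (h : ∀ p : Submodule ℂ X, IsInv X p → p = ⊥ ∨ p = ⊤) : Simple X := by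
  constructor
  intro Y f hm
  constructor
  · intro hiso h0
    have hid := IsIso.inv_hom_id f
    have hf0 : f.hom = 0 := by rw [h0, Action.zero_hom]
    obtain ⟨x, y, hxy⟩ := hnt
    apply hxy
    have key : ∀ z : X, z = 0 := by
      intro z
      have h1 : ((inv f ≫ f).hom.hom.hom : X →ₗ[ℂ] X) z = z := by rw [hid]; rfl
      rw [Action.comp_hom] at h1
      have h2 : (f.hom.hom.hom : Y →ₗ[ℂ] X) (((inv f).hom.hom.hom : X →ₗ[ℂ] Y) z) = z := h1
      rw [hf0] at h2
      exact h2.symm.trans rfl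
    exact (key x).trans (key y).symm
  · intro h0
    set F : Y →ₗ[ℂ] X := (f.hom.hom.hom : Y →ₗ[ℂ] X) with hF
    have hcomm : ∀ (g : G) (y : Y), F (Y.ρ g y) = X.ρ g (F y) := by
      intro g y
      exact congrArg (fun (φ : Y.V ⟶ X.V) => (φ.hom.hom : Y →ₗ[ℂ] X) y) (f.comm g)
    have hker : LinearMap.ker F = ⊥ := by
      have hKinv : IsInv Y (LinearMap.ker F) := by
        intro g x hx
        rw [LinearMap.mem_ker] at hx ⊢
        rw [hcomm g x, hx, map_zero]
      have hcancel : incl Y _ hKinv ≫ f = (0 : subRep Y _ hKinv ⟶ Y) ≫ f := by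
        apply Action.hom_ext
        rw [Limits.zero_comp]
        rw [Action.zero_hom, Action.comp_hom]
        apply FGModuleCat.hom_ext
        apply LinearMap.ext
        rintro ⟨x, hx⟩
        rw [LinearMap.mem_ker] at hx
        show F x = 0
        exact hx
      have hi0 : incl Y _ hKinv = 0 := by
        exact (cancel_mono f).mp hcancel
      rw [LinearMap.ker_eq_bot']
      intro m hmker
      have := congrArg (fun (φ : subRep Y _ hKinv ⟶ Y) => (φ.hom.hom.hom : _ →ₗ[ℂ] Y) ⟨m, by
        rw [LinearMap.mem_ker]; exact hmker⟩) hi0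
      exact this
    have hrange : LinearMap.range F = ⊤ := by
      have hRinv : IsInv X (LinearMap.range F) := by
        rintro g x ⟨y, rfl⟩
        exact ⟨Y.ρ g y, (hcomm g y)⟩
      rcases h _ hRinv with hbot | htop
      · exfalso
        apply h0
        apply Action.hom_ext
        rw [Action.zero_hom]
        apply FGModuleCat.hom_ext
        apply LinearMap.ext
        intro y
        have : F y ∈ LinearMap.range F := ⟨y, rfl⟩
        rw [hbot] at this
        simpa using this
      · exact htop
    have hbij : Function.Bijective F :=
      ⟨LinearMap.ker_eq_bot.mp hker, LinearMap.range_eq_top.mp hrange⟩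
    let e : Y.V ≃ₗ[ℂ] X.V := LinearEquiv.ofBijective F hbij
    refine ⟨(Action.mkIso (e.toFGModuleCatIso) (fun g => f.comm g)).inv, ?_, ?_⟩
    · apply Action.hom_ext
      rw [Action.comp_hom, Action.id_hom]
      apply FGModuleCat.hom_ext
      apply LinearMap.ext
      intro y
      show e.symm (e y) = y
      exact e.symm_apply_apply y
    · apply Action.hom_ext
      rw [Action.comp_hom, Action.id_hom]
      apply FGModuleCat.hom_ext
      apply LinearMap.ext
      intro x
      show e (e.symm x) = x
      exact e.apply_symm_apply x

lemma char_eq_zero_of_subsingleton (X : FDRep ℂ G) (hs : Subsingleton X) :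
    X.character = 0 := by
  funext g
  have : X.ρ g = 0 := Subsingleton.elim _ _
  show LinearMap.trace ℂ X (X.ρ g) = 0
  rw [this, map_zero]

lemma exists_minimal_inv (X : FDRep ℂ G) (hnt : Nontrivial X) :
    ∃ p : Submodule ℂ X, IsInv X p ∧ p ≠ ⊥ ∧
      ∀ r : Submodule ℂ X, IsInv X r → r ≠ ⊥ → ¬(r < p) := by
  classical
  set s : Set ℕ := {n | ∃ p : Submodule ℂ X, IsInv X p ∧ p ≠ ⊥ ∧ finrank ℂ p = n} with hs
  have htop : (⊤ : Submodule ℂ X) ≠ ⊥ := by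
    intro h
    obtain ⟨x, y, hxy⟩ := hnt
    apply hxy
    have hx : x ∈ (⊤ : Submodule ℂ X) := trivial
    have hy : y ∈ (⊤ : Submodule ℂ X) := trivial
    rw [h, Submodule.mem_bot] at hx hy
    rw [hx, hy]
  have hne : s.Nonempty := ⟨finrank ℂ (⊤ : Submodule ℂ X), ⊤, fun g x _ => trivial, htop, rfl⟩
  obtain ⟨p, hpinv, hpbot, hprank⟩ := Nat.sInf_mem hne
  refine ⟨p, hpinv, hpbot, ?_⟩
  intro r hrinv hrbot hlt
  have h1 : finrank ℂ r ∈ s := ⟨r, hrinv, hrbot, rfl⟩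
  have h2 := Nat.sInf_le h1
  have h3 : finrank ℂ r < finrank ℂ p := Submodule.finrank_lt_finrank_of_lt hlt
  rw [hprank] at h3
  omega

lemma simple_subRep_of_minimal (X : FDRep ℂ G) (p : Submodule ℂ X) (hp : IsInv X p)
    (hpbot : p ≠ ⊥) (hmin : ∀ r : Submodule ℂ X, IsInv X r → r ≠ ⊥ → ¬(r < p)) :
    Simple (subRep X p hp) := by
  apply simple_crit
  · exact Submodule.nontrivial_iff_ne_bot.mpr hpbot
  · intro r hr
    by_cases hrb : r = ⊥
    · exact Or.inl hrb
    right
    set r' : Submodule ℂ X := r.map (p.subtype : p →ₗ[ℂ] X) with hr'def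
    have hr'inv : IsInv X r' := by
      rintro g x ⟨y, hy, rfl⟩
      exact ⟨(subRep X p hp).ρ g y, hr g y hy, rfl⟩
    have hr'bot : r' ≠ ⊥ := by
      intro hb
      apply hrb
      rw [Submodule.eq_bot_iff] at hb ⊢
      intro y hy
      exact Subtype.ext (hb _ ⟨y, hy, rfl⟩)
    have hr'le : r' ≤ p := by
      rintro x ⟨y, hy, rfl⟩
      exact y.2
    have hnlt : ¬ (r' < p) := hmin r' hr'inv hr'bot
    have hr'p : r' = p := by
      by_contra hne
      exact hnlt (lt_of_le_of_ne hr'le hne)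
    have hmap : r.map (p.subtype : p →ₗ[ℂ] X)
        = Submodule.map (p.subtype : p →ₗ[ℂ] X) (⊤ : Submodule ℂ p) := by
      rw [Submodule.map_subtype_top]
      exact hr'p
    exact Submodule.map_injective_of_injective p.injective_subtype hmap

lemma char_decomp (S : Finset (G → ℂ))
    (hS2 : ∀ V : FDRep ℂ G, Simple V → V.character ∈ S) :
    ∀ (n : ℕ) (X : FDRep ℂ G), finrank ℂ X = n →
      ∃ m : (G → ℂ) → ℕ, X.character = ∑ f ∈ S, (m f : ℂ) • f := by
  classical
  intro n
  induction n using Nat.strong_induction_on with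
  | _ n IH =>
    intro X hX
    rcases Nat.eq_zero_or_pos n with h0 | hpos
    · subst h0
      have hsub : Subsingleton X := finrank_zero_iff.mp hX
      exact ⟨0, by simpa using char_eq_zero_of_subsingleton X hsub⟩
    · have hnt : Nontrivial X := by
        have : 0 < finrank ℂ X := hX ▸ hpos
        exact finrank_pos_iff.mp this
      obtain ⟨p, hpinv, hpbot, hmin⟩ := exists_minimal_inv X hnt
      obtain ⟨q, hqinv, hcompl⟩ := exists_isCompl_inv X p hpinv
      have hsimple := simple_subRep_of_minimal X p hpinv hpbot hmin
      have hmem : (subRep X p hpinv).character ∈ S := hS2 _ hsimple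
      have hrank : finrank ℂ p + finrank ℂ q = n := by
        rw [← hX]; exact Submodule.finrank_add_eq_of_isCompl hcompl
      have hppos : 0 < finrank ℂ p :=
        finrank_pos_iff.mpr (Submodule.nontrivial_iff_ne_bot.mpr hpbot)
      have hq_lt : finrank ℂ q < n := by omega
      obtain ⟨m, hm⟩ := IH (finrank ℂ q) hq_lt (subRep X q hqinv) (finrank_subRep X q hqinv)
      refine ⟨fun f => m f + (if f = (subRep X p hpinv).character then 1 else 0), ?_⟩
      have hadd : X.character
          = (subRep X p hpinv).character + (subRep X q hqinv).character :=
        funext fun g => char_add_of_isCompl X p q hpinv hqinv hcompl g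
      rw [hadd, hm]
      have hsplit : ∀ f ∈ S,
          (((m f + if f = (subRep X p hpinv).character then 1 else 0 : ℕ) : ℂ)) • f
          = (m f : ℂ) • f + (if f = (subRep X p hpinv).character then f else 0) := by
        intro f _
        split
        · push_cast
          rw [add_smul, one_smul]
        · simp
      rw [Finset.sum_congr rfl hsplit, Finset.sum_add_distrib,
        Finset.sum_ite_eq' S ((subRep X p hpinv).character) (fun f => f), if_pos hmem]
      abel

section ClassicalPart
open scoped Classical

variable (G) in
def cent (g : G) : ℕ := (Finset.univ.filter fun x : G => x * g = g * x).card

lemma trace_funLeft (σ : G → G) : LinearMap.trace ℂ (G → ℂ) (LinearMap.funLeft ℂ ℂ σ)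
    = ((Finset.univ.filter fun x => σ x = x).card : ℂ) := by
  classical
  rw [LinearMap.trace_eq_matrix_trace ℂ (Pi.basisFun ℂ G), Matrix.trace]
  have hdiag : ∀ x : G, Matrix.diag (LinearMap.toMatrix (Pi.basisFun ℂ G) (Pi.basisFun ℂ G)
      (LinearMap.funLeft ℂ ℂ σ)) x = if σ x = x then 1 else 0 := by
    intro x
    rw [Matrix.diag_apply, LinearMap.toMatrix_apply, Pi.basisFun_repr, LinearMap.funLeft_apply,
      Pi.basisFun_apply]
    simp [Pi.single_apply, eq_comm]
  rw [Finset.sum_congr rfl fun x _ => hdiag x]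
  simp [Finset.sum_ite_eq, Finset.filter_eq]

variable (G) in
def conjRep : FDRep ℂ G :=
  FDRep.of
    { toFun := fun g => LinearMap.funLeft ℂ ℂ (fun x => g⁻¹ * x * g)
      map_one' := by
        apply LinearMap.ext; intro f; funext x
        simp [LinearMap.funLeft_apply]
      map_mul' := fun g h => by
        apply LinearMap.ext; intro f; funext x
        simp [LinearMap.funLeft_apply, Module.End.mul_apply, mul_assoc] }

variable (G) in
def regRep : FDRep ℂ G :=
  FDRep.of
    { toFun := fun g => LinearMap.funLeft ℂ ℂ (fun x => g⁻¹ * x)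
      map_one' := by
        apply LinearMap.ext; intro f; funext x
        simp [LinearMap.funLeft_apply]
      map_mul' := fun g h => by
        apply LinearMap.ext; intro f; funext x
        simp [LinearMap.funLeft_apply, Module.End.mul_apply, mul_assoc] }

lemma conjRep_char (g : G) : (conjRep G).character g = (cent G g : ℂ) := by
  classical
  show LinearMap.trace ℂ (G → ℂ) (LinearMap.funLeft ℂ ℂ (fun x => g⁻¹ * x * g)) = _
  rw [trace_funLeft]
  congr 2
  apply Finset.filter_congr
  intro x _
  constructor
  · intro h
    have := congrArg (g * ·) h
    simpa [← mul_assoc] using this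
  · intro h
    rw [mul_assoc, h, ← mul_assoc, inv_mul_cancel, one_mul]

lemma regRep_char (g : G) : (regRep G).character g
    = if g = 1 then (Fintype.card G : ℂ) else 0 := by
  classical
  show LinearMap.trace ℂ (G → ℂ) (LinearMap.funLeft ℂ ℂ (fun x => g⁻¹ * x)) = _
  rw [trace_funLeft]
  by_cases h : g = 1
  · subst h
    rw [if_pos rfl, Finset.filter_true_of_mem (by intro x _; simp), Finset.card_univ]
  · rw [if_neg h]
    have hemp : (Finset.univ.filter fun x : G => g⁻¹ * x = x) = ∅ := by
      apply Finset.filter_false_of_mem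
      intro x _ hx
      apply h
      have h1 : g⁻¹ * x = 1 * x := by rw [hx, one_mul]
      have h2 : g⁻¹ = 1 := mul_right_cancel h1
      rwa [inv_eq_one] at h2
    rw [hemp]
    simp

lemma cent_inv (g : G) : cent G g⁻¹ = cent G g := by
  unfold cent
  congr 1
  apply Finset.filter_congr
  intro x _
  constructor
  · intro h
    have := congrArg (fun y => g * y * g) h
    simp [mul_assoc] at this
    exact this.symm
  · intro h
    have := congrArg (fun y => g⁻¹ * y * g⁻¹) h
    simp [mul_assoc] at this
    exact this.symm

lemma cent_one : cent G 1 = Fintype.card G := by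
  unfold cent
  rw [Finset.filter_true_of_mem (by intro x _; simp), Finset.card_univ]

lemma card_conj_fiber (x g h₀ : G) (h : h₀ * x * h₀⁻¹ = g) :
    (Finset.univ.filter fun h : G => h * x * h⁻¹ = g).card = cent G g := by
  unfold cent
  have hx : x = h₀⁻¹ * g * h₀ := by rw [← h]; group
  apply Finset.card_bij (fun a _ => a * h₀⁻¹)
  · intro a ha
    simp only [Finset.mem_filter, Finset.mem_univ, true_and] at ha ⊢
    have key : (a * h₀⁻¹) * g * (a * h₀⁻¹)⁻¹ = g := by
      calc (a * h₀⁻¹) * g * (a * h₀⁻¹)⁻¹ = a * (h₀⁻¹ * g * h₀) * a⁻¹ := by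
            simp [mul_assoc]
        _ = a * x * a⁻¹ := by rw [← hx]
        _ = g := ha
    have := congrArg (· * (a * h₀⁻¹)) key
    simpa [mul_assoc] using this
  · intro a _ b _ hab
    exact mul_right_cancel hab
  · intro b hb
    simp only [Finset.mem_filter, Finset.mem_univ, true_and] at hb
    refine ⟨b * h₀, ?_, by simp [mul_assoc]⟩
    simp only [Finset.mem_filter, Finset.mem_univ, true_and]
    have : b * g * b⁻¹ = g := by
      have := congrArg (· * b⁻¹) hb
      simpa [mul_assoc] using this
    calc (b * h₀) * x * (b * h₀)⁻¹ = b * (h₀ * x * h₀⁻¹) * b⁻¹ := by simp [mul_assoc]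
      _ = b * g * b⁻¹ := by rw [h]
      _ = g := this

lemma sum_cent_mul (f : G → ℂ) (hf : ∀ (h g : G), f (h * g * h⁻¹) = f g) :
    ∑ g : G, (cent G g : ℂ) * f g
      = (Fintype.card G : ℂ) * ∑ᶠ C : ConjClasses G, f (Quotient.out C) := by
  haveI : Fintype (ConjClasses G) := Fintype.ofFinite _
  rw [finsum_eq_sum_of_fintype, Finset.mul_sum]
  rw [← Finset.sum_fiberwise_of_maps_to (g := fun g : G => ConjClasses.mk g)
    (t := Finset.univ) (fun x _ => Finset.mem_univ _) (fun g => (cent G g : ℂ) * f g)]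
  apply Finset.sum_congr rfl
  intro C _
  set x := Quotient.out C with hxdef
  have hmkx : ConjClasses.mk x = C := Quotient.out_eq C
  have key : ∑ h : G, f (h * x * h⁻¹) = (Fintype.card G : ℂ) * f x := by
    rw [Finset.sum_congr rfl (fun h _ => hf h x), Finset.sum_const, Finset.card_univ,
      nsmul_eq_mul]
  have key2 : ∑ h : G, f (h * x * h⁻¹)
      = ∑ g ∈ Finset.univ.filter (fun g : G => ConjClasses.mk g = C),
          (cent G g : ℂ) * f g := by
    rw [← Finset.sum_fiberwise_of_maps_to (g := fun h : G => h * x * h⁻¹)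
      (t := Finset.univ) (fun h _ => Finset.mem_univ _) (fun h => f (h * x * h⁻¹))]
    rw [Finset.sum_filter]
    apply Finset.sum_congr rfl
    intro g _
    by_cases hg : ConjClasses.mk g = C
    · rw [if_pos hg]
      have hconj : IsConj x g := by
        rw [← hmkx] at hg
        exact (ConjClasses.mk_eq_mk_iff_isConj.mp hg).symm
      obtain ⟨h₀, hh₀⟩ := isConj_iff.mp hconj
      rw [Finset.sum_congr rfl (fun h hh => ?_), Finset.sum_const,
        card_conj_fiber x g h₀ hh₀, nsmul_eq_mul]
      simp only [Finset.mem_filter] at hh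
      rw [hh.2]
    · rw [if_neg hg]
      have hemp : Finset.univ.filter (fun h : G => h * x * h⁻¹ = g) = ∅ := by
        apply Finset.filter_false_of_mem
        intro h _ hh
        apply hg
        rw [← hh, ← hmkx]
        exact ConjClasses.mk_eq_mk_iff_isConj.mpr (isConj_iff.mpr ⟨h, rfl⟩).symm
      rw [hemp, Finset.sum_empty]
  exact key2.symm.trans key

variable (G) in
def J (a b : G → ℂ) : ℂ := ∑ g : G, a g * b g⁻¹

lemma card_ne_zero' : (Fintype.card G : ℂ) ≠ 0 := by
  exact_mod_cast Nat.cast_ne_zero.mpr Fintype.card_ne_zero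

lemma J_char (V W : FDRep ℂ G) (hV : Simple V) (hW : Simple W) :
    J G (V.character) (W.character)
      = if Nonempty (V ≅ W) then (Fintype.card G : ℂ) else 0 := by
  haveI := hV; haveI := hW
  have h := FDRep.char_orthonormal V W
  rw [Nat.card_eq_fintype_card] at h
  have h' : ((Fintype.card G : ℂ))⁻¹ * (∑ g : G, V.character g * W.character g⁻¹)
      = (if Nonempty (V ≅ W) then (1 : ℂ) else 0) := h
  have : J G (V.character) (W.character)
      = (Fintype.card G : ℂ) * (((Fintype.card G : ℂ))⁻¹
          * (∑ g : G, V.character g * W.character g⁻¹)) := by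
    rw [mul_inv_cancel_left₀ card_ne_zero']
    rfl
  rw [this, h', mul_ite, mul_one, mul_zero]

lemma J_mem (S : Finset (G → ℂ)) (hS1 : ∀ f ∈ S, ∃ V : FDRep ℂ G, Simple V ∧ V.character = f)
    (f f' : G → ℂ) (hf : f ∈ S) (hf' : f' ∈ S) :
    J G f f' = if f = f' then (Fintype.card G : ℂ) else 0 := by
  obtain ⟨V, hVs, hVc⟩ := hS1 f hf
  obtain ⟨V', hV's, hV'c⟩ := hS1 f' hf'
  subst hVc; subst hV'c
  rw [J_char V V' hVs hV's]
  by_cases hiso : Nonempty (V ≅ V')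
  · rw [if_pos hiso, if_pos (FDRep.char_iso hiso.some)]
  · rw [if_neg hiso]
    by_cases hch : V.character = V'.character
    · exfalso
      have h1 := J_char V V' hVs hV's
      rw [if_neg hiso] at h1
      have h2 := J_char V V hVs hVs
      rw [if_pos ⟨Iso.refl V⟩] at h2
      rw [← hch] at h1
      exact card_ne_zero' (h2.symm.trans h1)
    · rw [if_neg hch]

lemma J_sum_left (T : Finset (G → ℂ)) (c : (G → ℂ) → ℂ) (b : G → ℂ) :
    J G (∑ f ∈ T, c f • f) b = ∑ f ∈ T, c f * J G f b := by
  unfold J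
  simp only [Finset.sum_apply, Pi.smul_apply, smul_eq_mul, Finset.sum_mul, Finset.mul_sum]
  rw [Finset.sum_comm]
  apply Finset.sum_congr rfl
  intro f _
  apply Finset.sum_congr rfl
  intro g _
  ring

lemma J_sum_right (T : Finset (G → ℂ)) (c : (G → ℂ) → ℂ) (a : G → ℂ) :
    J G a (∑ f ∈ T, c f • f) = ∑ f ∈ T, c f * J G a f := by
  unfold J
  simp only [Finset.sum_apply, Pi.smul_apply, smul_eq_mul, Finset.sum_mul, Finset.mul_sum]
  rw [Finset.sum_comm]
  apply Finset.sum_congr rfl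
  intro f _
  apply Finset.sum_congr rfl
  intro g _
  ring

lemma J_decomp_single (S : Finset (G → ℂ))
    (hS1 : ∀ f ∈ S, ∃ V : FDRep ℂ G, Simple V ∧ V.character = f)
    (m : (G → ℂ) → ℕ) (a : G → ℂ) (ha : a = ∑ f ∈ S, (m f : ℂ) • f)
    (f : G → ℂ) (hf : f ∈ S) :
    J G a f = (Fintype.card G : ℂ) * m f := by
  rw [ha, J_sum_left]
  rw [Finset.sum_congr rfl (fun f' hf' => by rw [J_mem S hS1 f' f hf' hf])]
  simp only [mul_ite, mul_zero]
  rw [Finset.sum_ite_eq' S f (fun f' => (m f' : ℂ) * (Fintype.card G : ℂ)), if_pos hf]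
  ring

lemma classsum_eq (S : Finset (G → ℂ))
    (hS1 : ∀ f ∈ S, ∃ V : FDRep ℂ G, Simple V ∧ V.character = f)
    (m : (G → ℂ) → ℕ) (hψ : (conjRep G).character = ∑ f ∈ S, (m f : ℂ) • f)
    (f : G → ℂ) (hf : f ∈ S) :
    ∑ᶠ C : ConjClasses G, f (Quotient.out C) = (m f : ℂ) := by
  obtain ⟨V, hVs, hVc⟩ := hS1 f hf
  have hconj : ∀ (h g : G), f (h * g * h⁻¹) = f g := by
    intro h g
    rw [← hVc]
    exact FDRep.char_conj V g h
  have h1 := sum_cent_mul f hconj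
  have h2 : J G (conjRep G).character f = ∑ g : G, (cent G g : ℂ) * f g := by
    unfold J
    rw [← Equiv.sum_comp (Equiv.inv G) (fun g => (conjRep G).character g * f g⁻¹)]
    apply Finset.sum_congr rfl
    intro g _
    simp only [Equiv.inv_apply, inv_inv]
    rw [conjRep_char, cent_inv]
  have h3 := J_decomp_single S hS1 m _ hψ f hf
  rw [h2, h1] at h3
  exact mul_left_cancel₀ card_ne_zero' h3

lemma J_reg_single (f : G → ℂ) :
    J G (regRep G).character f = (Fintype.card G : ℂ) * f 1 := by
  unfold J
  rw [Finset.sum_eq_single 1]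
  · rw [regRep_char, if_pos rfl, inv_one]
  · intro b _ hb
    rw [regRep_char, if_neg hb, zero_mul]
  · intro hb; exact absurd (Finset.mem_univ 1) hb

lemma J_conj_reg :
    J G (conjRep G).character (regRep G).character
      = (Fintype.card G : ℂ) * (Fintype.card G : ℂ) := by
  unfold J
  rw [Finset.sum_eq_single 1]
  · rw [conjRep_char, cent_one, inv_one, regRep_char, if_pos rfl]
  · intro b _ hb
    rw [regRep_char, if_neg (by simpa using hb), mul_zero]
  · intro hb; exact absurd (Finset.mem_univ 1) hb

lemma J_reg_reg :
    J G (regRep G).character (regRep G).character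
      = (Fintype.card G : ℂ) * (Fintype.card G : ℂ) := by
  unfold J
  rw [Finset.sum_eq_single 1]
  · rw [inv_one, regRep_char, if_pos rfl]
  · intro b _ hb
    rw [regRep_char (g := b⁻¹), if_neg (by simpa using hb), mul_zero]
  · intro hb; exact absurd (Finset.mem_univ 1) hb

lemma J_decomp_pair (S : Finset (G → ℂ))
    (hS1 : ∀ f ∈ S, ∃ V : FDRep ℂ G, Simple V ∧ V.character = f)
    (m n : (G → ℂ) → ℕ) (a b : G → ℂ) (ha : a = ∑ f ∈ S, (m f : ℂ) • f)
    (hb : b = ∑ f ∈ S, (n f : ℂ) • f) :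
    J G a b = (Fintype.card G : ℂ) * ∑ f ∈ S, ((m f * n f : ℕ) : ℂ) := by
  rw [hb, J_sum_right]
  rw [Finset.sum_congr rfl (fun f hf => by rw [J_decomp_single S hS1 m a ha f hf])]
  rw [Finset.mul_sum]
  apply Finset.sum_congr rfl
  intro f _
  push_cast
  ring

end ClassicalPart

end CharAux
end

/-- If all irreducible complex characters of the finite group `G` have degree at
most `2`, then the character table sum is at most twice the character degree sum. -/
theorem tableSum_le_two_mul_degreeSum_of_degree_le_two (G : Type) [Group G] [Fintype G]
    (hdeg : ∀ V : FDRep ℂ G, Simple V → Module.finrank ℂ V ≤ 2)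
    (S : Finset (G → ℂ)) (hS : IsIrrFamily G S) :
    tableSum G S ≤ 2 * degreeSum G S := by
  classical
  obtain ⟨hS1, hS2⟩ := hS
  obtain ⟨m, hψ⟩ := CharAux.char_decomp S hS2 _ (CharAux.conjRep G) rfl
  obtain ⟨nn, hreg⟩ := CharAux.char_decomp S hS2 _ (CharAux.regRep G) rfl
  have hcard : (Fintype.card G : ℂ) ≠ 0 := CharAux.card_ne_zero'
  have hnf : ∀ f ∈ S, (nn f : ℂ) = f 1 := by
    intro f hf
    have h3 := CharAux.J_decomp_single S hS1 nn _ hreg f hf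
    rw [CharAux.J_reg_single] at h3
    exact (mul_left_cancel₀ hcard h3).symm
  have hbound : ∀ f ∈ S, 1 ≤ nn f ∧ nn f ≤ 2 := by
    intro f hf
    obtain ⟨V, hVs, hVc⟩ := hS1 f hf
    have h1 : f 1 = (Module.finrank ℂ V : ℂ) := by
      rw [← hVc]; exact FDRep.char_one V
    have h2 : (nn f : ℂ) = (Module.finrank ℂ V : ℂ) := (hnf f hf).trans h1
    have hn : nn f = Module.finrank ℂ V := Nat.cast_injective h2
    have hnt : Nontrivial V := by
      by_contra hc
      rw [not_nontrivial_iff_subsingleton] at hc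
      haveI := hVs
      apply CategoryTheory.id_nonzero V
      apply Action.hom_ext
      apply FGModuleCat.hom_ext
      apply LinearMap.ext
      intro x
      exact @Subsingleton.elim _ hc _ _
    constructor
    · rw [hn]
      have : 0 < Module.finrank ℂ V := Module.finrank_pos_iff.mpr hnt
      omega
    · rw [hn]; exact hdeg V hVs
  have hsum_mn : ∑ f ∈ S, ((m f * nn f : ℕ) : ℂ) = (Fintype.card G : ℂ) := by
    have e1 := CharAux.J_decomp_pair S hS1 m nn _ _ hψ hreg
    rw [CharAux.J_conj_reg] at e1
    exact (mul_left_cancel₀ hcard e1.symm)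
  have hsum_nn : ∑ f ∈ S, ((nn f * nn f : ℕ) : ℂ) = (Fintype.card G : ℂ) := by
    have e1 := CharAux.J_decomp_pair S hS1 nn nn _ _ hreg hreg
    rw [CharAux.J_reg_reg] at e1
    exact (mul_left_cancel₀ hcard e1.symm)
  have t1 : tableSum G S = ∑ f ∈ S, ((m f : ℕ) : ℂ) :=
    Finset.sum_congr rfl (fun f hf => CharAux.classsum_eq S hS1 m hψ f hf)
  have t6 : degreeSum G S = ∑ f ∈ S, ((nn f : ℕ) : ℂ) :=
    Finset.sum_congr rfl (fun f hf => (hnf f hf).symm)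
  rw [t1, t6]
  calc ∑ f ∈ S, ((m f : ℕ) : ℂ)
      ≤ ∑ f ∈ S, ((m f * nn f : ℕ) : ℂ) := by
        apply Finset.sum_le_sum
        intro f hf
        have h1 : m f ≤ m f * nn f := Nat.le_mul_of_pos_right (m f) (hbound f hf).1
        exact_mod_cast h1
    _ = (Fintype.card G : ℂ) := hsum_mn
    _ = ∑ f ∈ S, ((nn f * nn f : ℕ) : ℂ) := hsum_nn.symm
    _ ≤ ∑ f ∈ S, ((2 * nn f : ℕ) : ℂ) := by
        apply Finset.sum_le_sum
        intro f hf
        have h1 : nn f * nn f ≤ 2 * nn f := Nat.mul_le_mul_right (nn f) (hbound f hf).2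
        exact_mod_cast h1
    _ = 2 * ∑ f ∈ S, ((nn f : ℕ) : ℂ) := by
        push_cast
        rw [Finset.mul_sum]
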